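/- Let d ≥ 1, let (t,x) ∈ ℝ^{1+d} with t > |x|, set τ = √(t² − |x|²), let f be a C¹ function near (t,x), and let v = (v⁰, v̄) ∈ ℝ × ℝ^d satisfy t v⁰ = Σ_i x^i v̄^i (i.e. v is tangent to the hyperboloid Σ_τ at (t,x)). Then (v⁰ ∂_t f + Σ_i v̄^i ∂_{x^i} f)² ≤ τ^{−2} (|v̄|² − (v⁰)²) Σ_{i=1}^d (L^i f)², where all derivatives are evaluated at (t,x). -/

import Mathlib

/-!
Common definitions: spacetime `ℝ^{1+d}` is modeled as `ℝ × (Fin d → ℝ)` with first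
coordinate the time `t`.
-/

noncomputable section

open Real MeasureTheory

/-- Spacetime `ℝ^{1+d}`. -/
abbrev Spt (d : ℕ) := ℝ × (Fin d → ℝ)

/-- Time derivative `∂_t f`. -/
def ptD {d : ℕ} (f : Spt d → ℝ) : Spt d → ℝ := fun p => fderiv ℝ f p (1, 0)

/-- Spatial derivative `∂_{x^i} f`. -/
def pxD {d : ℕ} (i : Fin d) (f : Spt d → ℝ) : Spt d → ℝ :=
  fun p => fderiv ℝ f p (0, Pi.single i 1)

/-- Lorentz boost `L^i f = t ∂_{x^i} f + x^i ∂_t f`. -/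
def LbD {d : ℕ} (i : Fin d) (f : Spt d → ℝ) : Spt d → ℝ :=
  fun p => p.1 * pxD i f p + p.2 i * ptD f p

/-- Iterated Lorentz boosts `L^α f = L^{α_m} ⋯ L^{α_1} f` for a multi-index `α`. -/
def Lmulti {d : ℕ} : List (Fin d) → (Spt d → ℝ) → Spt d → ℝ
  | [], f => f
  | i :: l, f => LbD i (Lmulti l f)

/-- Wave operator `□f = -∂_t² f + Σ_i ∂_{x^i}² f`. -/
def BoxD {d : ℕ} (f : Spt d → ℝ) : Spt d → ℝ :=
  fun p => -(ptD (ptD f) p) + ∑ i, pxD i (pxD i f) p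

/-- Minkowski pairing `η(df, dg) = -∂_t f ∂_t g + Σ_i ∂_{x^i} f ∂_{x^i} g`. -/
def etaD {d : ℕ} (f g : Spt d → ℝ) : Spt d → ℝ :=
  fun p => -(ptD f p * ptD g p) + ∑ i, pxD i f p * pxD i g p

/-- Morawetz field `K f = (t² + |x|²) ∂_t f + 2t Σ_i x^i ∂_{x^i} f`. -/
def KvD {d : ℕ} (f : Spt d → ℝ) : Spt d → ℝ :=
  fun p => (p.1 ^ 2 + ∑ i, p.2 i ^ 2) * ptD f p + 2 * p.1 * ∑ i, p.2 i * pxD i f p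

/-- Euclidean norm `|x|` of a spatial point. -/
def spnorm {d : ℕ} (x : Fin d → ℝ) : ℝ := Real.sqrt (∑ i, x i ^ 2)

/-- Hyperboloidal time `τ = √(t² - |x|²)`. -/
def tau {d : ℕ} (p : Spt d) : ℝ := Real.sqrt (p.1 ^ 2 - ∑ i, p.2 i ^ 2)

/-- `sobd d = ⌊d/2⌋ + 1`. -/
def sobd (d : ℕ) : ℕ := d / 2 + 1

/-- The hyperboloid `Σ_τ = {t² - |x|² = τ², t > 0}`. -/
def SigmaSet (d : ℕ) (τ : ℝ) : Set (Spt d) := {p | p.1 ^ 2 - ∑ i, p.2 i ^ 2 = τ ^ 2 ∧ 0 < p.1}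

/-- Integral over the hyperboloid `Σ_τ` with respect to the induced volume
`τ^d sinh(ρ)^{d-1} dρ dθ`; in the graph parameterization `t = √(τ² + |x|²)` of `Σ_τ`
over `ℝ^d` this volume form is exactly `(τ/t) dx`. -/
def hbInt (d : ℕ) (τ : ℝ) (F : Spt d → ℝ) : ℝ :=
  ∫ x : Fin d → ℝ,
    F (Real.sqrt (τ ^ 2 + ∑ i, x i ^ 2), x) * (τ / Real.sqrt (τ ^ 2 + ∑ i, x i ^ 2))

/-- Spatial partial derivative of a function on `ℝ^d`. -/
def pd {d : ℕ} (i : Fin d) (g : (Fin d → ℝ) → ℝ) : (Fin d → ℝ) → ℝ :=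
  fun x => fderiv ℝ g x (Pi.single i 1)

/-- Iterated spatial partial derivatives `∂^β g`. -/
def pdMulti {d : ℕ} : List (Fin d) → ((Fin d → ℝ) → ℝ) → (Fin d → ℝ) → ℝ
  | [], g => g
  | i :: l, g => pd i (pdMulti l g)

/-- Sobolev norm `‖g‖_{H^k(ℝ^d)}`. -/
def sobNorm {d : ℕ} (k : ℕ) (g : (Fin d → ℝ) → ℝ) : ℝ :=
  Real.sqrt (∑ m ∈ Finset.range (k + 1), ∑ β : Fin m → Fin d,
    ∫ x : Fin d → ℝ, (pdMulti (List.ofFn β) g x) ^ 2)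

/-- Initial energy `ℰ₀[f]² = ∫_{ℝ^d} (∂_t f(0,x))² + |∇_x f(0,x)|² dx`. -/
def E0 {d : ℕ} (f : Spt d → ℝ) : ℝ :=
  Real.sqrt (∫ x : Fin d → ℝ, ((ptD f (0, x)) ^ 2 + ∑ i, (pxD i f (0, x)) ^ 2))

/-- `|Lf| = ((L¹f)² + (L²f)²)^{1/2}` in two spatial dimensions. -/
def normL (f : Spt 2 → ℝ) (p : Spt 2) : ℝ := Real.sqrt ((LbD 0 f p) ^ 2 + (LbD 1 f p) ^ 2)

/-- The `∂_t`-energy `ℰ_τ[f]` on the hyperboloid `Σ_τ` (note `cosh ρ = t/τ`). -/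
def Ee (τ : ℝ) (f : Spt 2 → ℝ) : ℝ :=
  Real.sqrt (hbInt 2 τ fun p =>
    (τ ^ 2 * (p.1 / τ))⁻¹ * ((LbD 0 f p) ^ 2 + (LbD 1 f p) ^ 2) +
      (p.1 / τ)⁻¹ * (ptD f p) ^ 2)

/-- The `K`-energy `ℱ_τ[f]` on the hyperboloid `Σ_τ`. -/
def Fe (τ : ℝ) (f : Spt 2 → ℝ) : ℝ :=
  Real.sqrt (hbInt 2 τ fun p =>
    (p.1 / τ)⁻¹ * ((LbD 0 f p) ^ 2 + (LbD 1 f p) ^ 2) +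
      (τ ^ 2 * (p.1 / τ))⁻¹ * (KvD f p + p.1 * f p) ^ 2)

/-- `L^∞` norm of `f` along the hyperboloid `Σ_τ`. -/
def sigSup (τ : ℝ) (f : Spt 2 → ℝ) : ℝ :=
  ⨆ x : Fin 2 → ℝ, |f (Real.sqrt (τ ^ 2 + ∑ i, x i ^ 2), x)|

/-- Coercivity of the boosts over directions tangent to the hyperboloid. -/
theorem boost_coercivity (d : ℕ) (hd : 1 ≤ d) (p : Spt d) (hp : spnorm p.2 < p.1)
    (f : Spt d → ℝ) (hf : ContDiffAt ℝ 1 f p) (v0 : ℝ) (v : Fin d → ℝ)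
    (htang : p.1 * v0 = ∑ i, p.2 i * v i) :
    (v0 * ptD f p + ∑ i, v i * pxD i f p) ^ 2 ≤
      (tau p ^ 2)⁻¹ * ((∑ i, v i ^ 2) - v0 ^ 2) * ∑ i, LbD i f p ^ 2 := by
  set t := p.1 with htdef
  set a := ptD f p with hadef
  set X := ∑ i, p.2 i ^ 2 with hXdef
  set S := ∑ i, LbD i f p ^ 2 with hSdef
  set B := ∑ i, v i ^ 2 with hBdef
  set E := v0 * a + ∑ i, v i * pxD i f p with hEdef
  have hXnn : (0:ℝ) ≤ X := Finset.sum_nonneg fun i _ => sq_nonneg _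
  have ht : 0 < t := lt_of_le_of_lt (Real.sqrt_nonneg _) hp
  have hXt : X < t ^ 2 := by
    have h1 : spnorm p.2 ^ 2 = X := Real.sq_sqrt hXnn
    have hsn : 0 ≤ spnorm p.2 := Real.sqrt_nonneg _
    nlinarith [h1, hsn, hp]
  have htau : tau p ^ 2 = t ^ 2 - X := Real.sq_sqrt (by linarith)
  have htaupos : 0 < tau p ^ 2 := by rw [htau]; linarith
  have hS : 0 ≤ S := Finset.sum_nonneg fun i _ => sq_nonneg _
  have hkey : t * E = ∑ i, v i * LbD i f p := by
    have : ∀ i, v i * LbD i f p = t * (v i * pxD i f p) + (p.2 i * v i) * a := by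
      intro i; simp only [LbD]; ring
    rw [Finset.sum_congr rfl fun i _ => this i, Finset.sum_add_distrib,
      ← Finset.mul_sum, ← Finset.sum_mul, ← htang]
    simp only [hEdef]; ring
  have h1 : (∑ i, v i * LbD i f p) ^ 2 ≤ B * S :=
    Finset.sum_mul_sq_le_sq_mul_sq _ _ _
  have h2 : (∑ i, p.2 i * v i) ^ 2 ≤ X * B :=
    Finset.sum_mul_sq_le_sq_mul_sq _ _ _
  have h2' : (t * v0) ^ 2 ≤ X * B := htang ▸ h2
  rw [show (tau p ^ 2)⁻¹ * (B - v0 ^ 2) * S = ((B - v0 ^ 2) * S) / (tau p ^ 2) from by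
    ring, le_div_iff₀ htaupos]
  have ht2 : (0:ℝ) < t ^ 2 := by positivity
  rw [← mul_le_mul_iff_of_pos_right ht2]
  have h1' : (t * E) ^ 2 ≤ B * S := by rw [hkey]; exact h1
  have hA : 0 ≤ tau p ^ 2 * (B * S - (t * E) ^ 2) :=
    mul_nonneg htaupos.le (sub_nonneg.2 h1')
  have hB2 : 0 ≤ S * (X * B - (t * v0) ^ 2) := mul_nonneg hS (sub_nonneg.2 h2')
  nlinarith [hA, hB2, htau]
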